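/- Let G be a maximal outerplanar graph on n vertices, let ℓ ≥ 1 be an integer, and let xy be an edge incident to the outer face of the (unique) outerplane embedding of G. If n ≥ ℓ+2, then there exists an edge uv of G such that one of the two uv-split subgraphs H of G has h vertices with ℓ+2 ≤ h ≤ 2ℓ+1, and if uv ≠ xy then H does not contain the edge xy. -/

import Mathlib

open SimpleGraph

/-- `H` is a minor of `G`: disjoint connected branch sets witnessing every edge of `H`. -/
def IsMinorOf {β α : Type} (H : SimpleGraph β) (G : SimpleGraph α) : Prop :=
  ∃ f : β → Set α,
    (∀ b, (f b).Nonempty) ∧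
    (∀ b, (G.induce (f b)).Connected) ∧
    (Pairwise fun b₁ b₂ => Disjoint (f b₁) (f b₂)) ∧
    ∀ ⦃b₁ b₂⦄, H.Adj b₁ b₂ → ∃ u ∈ f b₁, ∃ v ∈ f b₂, G.Adj u v

/-- A graph is planar iff it has neither a `K₅` nor a `K₃,₃` minor (Wagner's theorem). -/
def IsPlanar {α : Type} (G : SimpleGraph α) : Prop :=
  ¬ IsMinorOf (completeGraph (Fin 5)) G ∧
  ¬ IsMinorOf (completeBipartiteGraph (Fin 3) (Fin 3)) G

/-- A graph is outerplanar iff it has neither a `K₄` nor a `K₂,₃` minor. -/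
def IsOuterplanar {α : Type} (G : SimpleGraph α) : Prop :=
  ¬ IsMinorOf (completeGraph (Fin 4)) G ∧
  ¬ IsMinorOf (completeBipartiteGraph (Fin 2) (Fin 3)) G

/-- An outerpath is (isomorphic to) a spanning subgraph of the square of a path:
there is a linear ordering of the vertices in which every edge joins vertices
at distance at most `2`. -/
def IsOuterpath {α : Type} [Fintype α] (G : SimpleGraph α) : Prop :=
  ∃ σ : α ≃ Fin (Fintype.card α),
    ∀ u v, G.Adj u v → (σ u).val ≤ (σ v).val + 2 ∧ (σ v).val ≤ (σ u).val + 2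

/-- Arc of the outer cycle `0,1,…,n-1` from `a` to `b` (inclusive): the vertex set of
one of the two `ab`-split subgraphs of a maximal outerplanar graph whose
outerplane embedding has the canonical outer cycle on `ZMod n`. -/
def arc (n : ℕ) [NeZero n] (a b : ZMod n) : Set (ZMod n) := {w | (w - a).val ≤ (b - a).val}

section AuxStmt10

variable {n : ℕ} [NeZero n]

lemma zval_back (x : ZMod n) : ((x.val : ℕ) : ZMod n) = x := ZMod.natCast_rightInverse x

lemma zval_inj {x y : ZMod n} (h : x.val = y.val) : x = y := ZMod.val_injective n h

lemma zval_neg {x : ZMod n} (h : x ≠ 0) : (-x).val = n - x.val :=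
  @ZMod.val_neg_of_ne_zero _ _ x ⟨h⟩

lemma zval_add_pos (u : ZMod n) {m : ℕ} (hm : m < n) : (u + (m : ZMod n) - u).val = m := by
  rw [add_sub_cancel_left, ZMod.val_cast_of_lt hm]

lemma zval_neg_one (h3 : 3 ≤ n) : (-1 : ZMod n).val = n - 1 := by
  have : ((n - 1 : ℕ) : ZMod n) = -1 := by
    have : ((n : ℕ) : ZMod n) = 0 := ZMod.natCast_self n
    push_cast [Nat.cast_sub (by omega : 1 ≤ n)]
    rw [this]; ring
  rw [← this, ZMod.val_cast_of_lt (by omega)]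

def arcSet (a : ZMod n) (lo hi : ℕ) : Set (ZMod n) := {w | lo ≤ (w - a).val ∧ (w - a).val ≤ hi}

lemma mem_arcSet (a : ZMod n) {lo hi m : ℕ} (h1 : lo ≤ m) (h2 : m ≤ hi) (h3 : hi < n) :
    a + (m : ZMod n) ∈ arcSet a lo hi := by
  constructor <;> rw [zval_add_pos a (by omega)] <;> omega

lemma arc_connected (G : SimpleGraph (ZMod n)) (hcycle : ∀ i : ZMod n, G.Adj i (i + 1))
    (a : ZMod n) (lo hi : ℕ) (h1 : lo ≤ hi) (h2 : hi < n) :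
    (G.induce (arcSet a lo hi)).Connected := by
  rw [connected_iff_exists_forall_reachable]
  refine ⟨⟨a + (lo : ZMod n), mem_arcSet a le_rfl h1 h2⟩, ?_⟩
  have key : ∀ t : ℕ, ∀ _ : lo + t ≤ hi,
      (G.induce (arcSet a lo hi)).Reachable
        ⟨a + (lo : ZMod n), mem_arcSet a le_rfl h1 h2⟩
        ⟨a + ((lo + t : ℕ) : ZMod n), mem_arcSet a (by omega) ‹lo + t ≤ hi› h2⟩ := by
    intro t
    induction t with
    | zero => intro _; rfl
    | succ t ih =>
      intro ht
      refine (ih (by omega)).trans (Adj.reachable ?_)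
      have : (((lo + (t+1) : ℕ)) : ZMod n) = ((lo + t : ℕ) : ZMod n) + 1 := by push_cast; ring
      simp only [comap_adj, Function.Embedding.coe_subtype]
      rw [this, ← add_assoc]
      exact hcycle _
  rintro ⟨w, hw1, hw2⟩
  have hweq : w = a + (((w - a).val : ℕ) : ZMod n) := by rw [zval_back]; ring
  have : (G.induce (arcSet a lo hi)).Reachable
      ⟨a + (lo : ZMod n), mem_arcSet a le_rfl h1 h2⟩ ⟨w, ⟨hw1, hw2⟩⟩ := by
    have h := key ((w - a).val - lo) (by omega)
    convert h using 2
    · exact Subtype.ext (hweq.trans (by congr 1; congr 1; omega))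
  exact this.symm.symm

def Noncross (H : SimpleGraph (ZMod n)) : Prop :=
  ∀ a b c d : ZMod n, H.Adj a b → H.Adj c d →
    ¬(0 < (c - a).val ∧ (c - a).val < (b - a).val ∧ (b - a).val < (d - a).val)

lemma noncross_of_G (G : SimpleGraph (ZMod n)) (hK4 : ¬ IsMinorOf (completeGraph (Fin 4)) G)
    (hcycle : ∀ i : ZMod n, G.Adj i (i + 1)) : Noncross G := by
  rintro a b c d hab hcd ⟨h1, h2, h3⟩
  apply hK4
  set i := (c - a).val with hi
  set j := (b - a).val with hj
  set l := (d - a).val with hl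
  have hln : l < n := ZMod.val_lt _
  have hedge : ∀ p : ℕ, 0 < p → p < n →
      G.Adj (a + ((p - 1 : ℕ) : ZMod n)) (a + ((p : ℕ) : ZMod n)) := by
    intro p hp hq
    have : ((p : ℕ) : ZMod n) = ((p - 1 : ℕ) : ZMod n) + 1 := by
      push_cast [Nat.cast_sub (by omega : 1 ≤ p)]; ring
    rw [this, ← add_assoc]
    exact hcycle _
  have hwrap : G.Adj (a + ((n - 1 : ℕ) : ZMod n)) a := by
    have h0 : a = a + ((n - 1 : ℕ) : ZMod n) + 1 := by
      have : ((n - 1 : ℕ) : ZMod n) + 1 = ((n : ℕ) : ZMod n) := by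
        push_cast [Nat.cast_sub (by omega : 1 ≤ n)]; ring
      rw [add_assoc, this, ZMod.natCast_self, add_zero]
    rw (occs := .pos [2]) [h0]
    exact hcycle _
  have ha0 : a ∈ arcSet a 0 (i - 1) := by
    constructor <;> simp [sub_self]
  have hc1 : c ∈ arcSet a i (j - 1) := ⟨le_rfl, by omega⟩
  have hb2 : b ∈ arcSet a j (l - 1) := ⟨le_rfl, by omega⟩
  have hd3 : d ∈ arcSet a l (n - 1) := ⟨le_rfl, by omega⟩
  refine ⟨fun t : Fin 4 =>
      arcSet a (![0, i, j, l] t) (![i - 1, j - 1, l - 1, n - 1] t), ?_, ?_, ?_, ?_⟩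
  · intro t
    fin_cases t
    · exact ⟨a, ha0⟩
    · exact ⟨c, hc1⟩
    · exact ⟨b, hb2⟩
    · exact ⟨d, hd3⟩
  · intro t
    fin_cases t
    · exact arc_connected G hcycle a 0 (i - 1) (by omega) (by omega)
    · exact arc_connected G hcycle a i (j - 1) (by omega) (by omega)
    · exact arc_connected G hcycle a j (l - 1) (by omega) (by omega)
    · exact arc_connected G hcycle a l (n - 1) (by omega) (by omega)
  · intro s t hst
    rw [Set.disjoint_left]
    intro w hws hwt
    obtain ⟨hs1, hs2⟩ := hws
    obtain ⟨ht1, ht2⟩ := hwt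
    fin_cases s <;> fin_cases t <;> simp at hs1 hs2 ht1 ht2 hst <;> omega
  · intro s t hst
    have e01 : ∃ u ∈ arcSet a 0 (i - 1), ∃ v ∈ arcSet a i (j - 1), G.Adj u v :=
      ⟨a + ((i - 1 : ℕ) : ZMod n), mem_arcSet a (Nat.zero_le _) le_rfl (by omega),
        a + ((i : ℕ) : ZMod n), mem_arcSet a le_rfl (by omega) (by omega),
        hedge i (by omega) (by omega)⟩
    have e12 : ∃ u ∈ arcSet a i (j - 1), ∃ v ∈ arcSet a j (l - 1), G.Adj u v :=
      ⟨a + ((j - 1 : ℕ) : ZMod n), mem_arcSet a (by omega) le_rfl (by omega),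
        a + ((j : ℕ) : ZMod n), mem_arcSet a le_rfl (by omega) (by omega),
        hedge j (by omega) (by omega)⟩
    have e23 : ∃ u ∈ arcSet a j (l - 1), ∃ v ∈ arcSet a l (n - 1), G.Adj u v :=
      ⟨a + ((l - 1 : ℕ) : ZMod n), mem_arcSet a (by omega) le_rfl (by omega),
        a + ((l : ℕ) : ZMod n), mem_arcSet a le_rfl (by omega) (by omega),
        hedge l (by omega) (by omega)⟩
    have e30 : ∃ u ∈ arcSet a l (n - 1), ∃ v ∈ arcSet a 0 (i - 1), G.Adj u v :=
      ⟨a + ((n - 1 : ℕ) : ZMod n), mem_arcSet a (by omega) le_rfl (by omega), a, ha0, hwrap⟩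
    have e02 : ∃ u ∈ arcSet a 0 (i - 1), ∃ v ∈ arcSet a j (l - 1), G.Adj u v :=
      ⟨a, ha0, b, hb2, hab⟩
    have e13 : ∃ u ∈ arcSet a i (j - 1), ∃ v ∈ arcSet a l (n - 1), G.Adj u v :=
      ⟨c, hc1, d, hd3, hcd⟩
    have sw : ∀ P Q : Set (ZMod n), (∃ u ∈ P, ∃ v ∈ Q, G.Adj u v) →
        ∃ u ∈ Q, ∃ v ∈ P, G.Adj u v := by
      rintro P Q ⟨u, hu, v, hv, huv⟩; exact ⟨v, hv, u, hu, huv.symm⟩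
    fin_cases s <;> fin_cases t
    · exact absurd rfl hst
    · exact e01
    · exact e02
    · exact sw _ _ e30
    · exact sw _ _ e01
    · exact absurd rfl hst
    · exact e12
    · exact e13
    · exact sw _ _ e02
    · exact sw _ _ e12
    · exact absurd rfl hst
    · exact e23
    · exact e30
    · exact sw _ _ e13
    · exact sw _ _ e23
    · exact absurd rfl hst

def under (H : SimpleGraph (ZMod n)) (u : ZMod n) (d : ℕ) : Set (Sym2 (ZMod n)) :=
  {e | e ∈ H.edgeSet ∧ ∀ w ∈ e, (w - u).val ≤ d}

lemma under_bound (H : SimpleGraph (ZMod n)) (hH : ∀ i : ZMod n, H.Adj i (i + 1))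
    (hnc : Noncross H) :
    ∀ d : ℕ, 1 ≤ d → d ≤ n - 1 → ∀ u : ZMod n, (under H u d).ncard ≤ 2 * d - 1 := by
  classical
  have h2n : 2 ≤ n := by
    rcases Nat.lt_or_ge n 2 with h | h
    · interval_cases n
      · exact absurd rfl (NeZero.ne 0)
      · exact absurd (hH 0) (by rw [Subsingleton.elim ((0 : ZMod 1) + 1) 0]; exact H.irrefl)
    · exact h
  intro d
  induction d using Nat.strong_induction_on with
  | _ d ih =>
    intro hd1 hdn u
    rcases Nat.lt_or_ge d 2 with hd2 | hd2
    · -- d = 1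
      have hd : d = 1 := by omega
      subst hd
      have hsub : under H u 1 ⊆ {s(u, u + 1)} := by
        rintro e ⟨he, hpos⟩
        induction e with
        | _ a b =>
          have hab : H.Adj a b := he
          have hane : a ≠ b := hab.ne
          have hia : (a - u).val ≤ 1 := hpos a (by simp)
          have hib : (b - u).val ≤ 1 := hpos b (by simp)
          have hne' : (a - u).val ≠ (b - u).val := by
            intro h; exact hane (by have := zval_inj h; simpa [sub_left_inj] using this)
          have ha' : a = u + (((a - u).val : ℕ) : ZMod n) := by rw [zval_back]; ring
          have hb' : b = u + (((b - u).val : ℕ) : ZMod n) := by rw [zval_back]; ring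
          rcases Nat.lt_or_ge (a - u).val 1 with h0 | h1
          · have hb1 : (b - u).val = 1 := by omega
            have : a = u := by rw [ha', Nat.lt_one_iff.mp h0]; simp
            have : b = u + 1 := by rw [hb', hb1]; norm_num
            simp [Set.mem_singleton_iff, ‹a = u›, this]
          · have ha1 : (a - u).val = 1 := by omega
            have hb0 : (b - u).val = 0 := by omega
            have : a = u + 1 := by rw [ha', ha1]; norm_num
            have : b = u := by rw [hb', hb0]; simp
            rw [Set.mem_singleton_iff, Sym2.eq_swap]
            simp [‹a = u + 1›, this]
      calc (under H u 1).ncard ≤ ({s(u, u + 1)} : Set (Sym2 (ZMod n))).ncard :=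
            Set.ncard_le_ncard hsub (Set.finite_singleton _)
        _ = 1 := Set.ncard_singleton _
    · -- d ≥ 2
      have hKne : ((Finset.Icc 1 (d - 1)).filter (fun j => H.Adj u (u + (j : ℕ)))).Nonempty := by
        refine ⟨1, ?_⟩
        simp only [Finset.mem_filter, Finset.mem_Icc]
        exact ⟨⟨le_rfl, by omega⟩, by simpa using hH u⟩
      set k := ((Finset.Icc 1 (d - 1)).filter (fun j => H.Adj u (u + (j : ℕ)))).max' hKne with hk
      have hkmem := Finset.max'_mem _ hKne
      rw [Finset.mem_filter, Finset.mem_Icc] at hkmem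
      obtain ⟨⟨hk1, hkd⟩, hadjk⟩ := hkmem
      have hkmax : ∀ j, 1 ≤ j → j ≤ d - 1 → H.Adj u (u + (j : ℕ)) → j ≤ k := by
        intro j hj1 hjd hadj
        exact Finset.le_max' _ j (by simp only [Finset.mem_filter, Finset.mem_Icc]; exact ⟨⟨hj1, hjd⟩, hadj⟩)
      have hvalk : ((u + (k : ℕ)) - u).val = k := zval_add_pos u (by omega)
      -- subset claim
      have main : ∀ a b : ZMod n, H.Adj a b → (a - u).val < (b - u).val → (b - u).val ≤ d →
          s(a, b) ∈ under H u k ∪ under H (u + (k : ℕ)) (d - k) ∪ {s(u, u + (d : ℕ))} := by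
        intro a b hab hij hjd
        set i := (a - u).val with hi
        set j := (b - u).val with hj2
        have ha' : a = u + ((i : ℕ) : ZMod n) := by rw [hi, zval_back]; ring
        have hb' : b = u + ((j : ℕ) : ZMod n) := by rw [hj2, zval_back]; ring
        have memk : j ≤ k → s(a, b) ∈ under H u k := by
          intro h
          refine ⟨hab, ?_⟩
          intro w hw
          rw [Sym2.mem_iff] at hw
          rcases hw with rfl | rfl
          · omega
          · omega
        rcases Nat.eq_zero_or_pos i with hi0 | hipos
        · -- a = u
          rcases Nat.lt_or_ge k j with hkj | hjk
          · rcases Nat.lt_or_ge j d with hjd' | _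
            · exfalso
              have hau : a = u := by rw [ha', hi0]; simp
              have : j ≤ k := hkmax j (by omega) (by omega) (by rw [← hb', ← hau]; exact hab)
              omega
            · have hjd2 : j = d := by omega
              refine Set.mem_union_right _ ?_
              rw [Set.mem_singleton_iff]
              have hau : a = u := by rw [ha', hi0]; simp
              rw [hau, hb', hjd2]
          · exact Set.mem_union_left _ (Set.mem_union_left _ (memk hjk))
        · rcases Nat.lt_or_ge k j with hkj | hjk
          · rcases Nat.lt_or_ge i k with hik | hki
            · exfalso
              exact hnc u (u + (k : ℕ)) a b hadjk hab ⟨by omega, by omega, by omega⟩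
            · -- i ≥ k : in upper part
              refine Set.mem_union_left _ (Set.mem_union_right _ ⟨hab, ?_⟩)
              intro w hw
              have hsub : ∀ c : ZMod n, (c - u).val ≥ k → (c - u).val ≤ d →
                  (c - (u + (k : ℕ))).val ≤ d - k := by
                intro c h1 h2
                have : c - (u + (k : ℕ)) = (c - u) - ((k : ℕ) : ZMod n) := by ring
                rw [this, ZMod.val_sub (by rw [ZMod.val_cast_of_lt (by omega)]; omega),
                  ZMod.val_cast_of_lt (by omega : k < n)]
                omega
              rw [Sym2.mem_iff] at hw
              rcases hw with rfl | rfl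
              · exact hsub _ (by omega) (by omega)
              · exact hsub _ (by omega) (by omega)
          · exact Set.mem_union_left _ (Set.mem_union_left _ (memk hjk))
      have hsubset : under H u d ⊆ under H u k ∪ under H (u + (k : ℕ)) (d - k) ∪ {s(u, u + (d : ℕ))} := by
        rintro e he
        obtain ⟨he1, he2⟩ := he
        induction e with
        | _ a b =>
          have hab : H.Adj a b := he1
          have hne' : (a - u).val ≠ (b - u).val := by
            intro h
            exact hab.ne (by have := zval_inj h; simpa [sub_left_inj] using this)
          have hia : (a - u).val ≤ d := he2 a (by simp)
          have hib : (b - u).val ≤ d := he2 b (by simp)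
          rcases Nat.lt_or_ge (a - u).val (b - u).val with h | h
          · exact main a b hab h hib
          · have := main b a hab.symm (by omega) hia
            rwa [show s(b, a) = s(a, b) from Sym2.eq_swap] at this
      calc (under H u d).ncard
          ≤ (under H u k ∪ under H (u + (k : ℕ)) (d - k) ∪ {s(u, u + (d : ℕ))}).ncard :=
            Set.ncard_le_ncard hsubset (Set.toFinite _)
        _ ≤ (under H u k ∪ under H (u + (k : ℕ)) (d - k)).ncard + ({s(u, u + (d : ℕ))} : Set (Sym2 (ZMod n))).ncard :=
            Set.ncard_union_le _ _
        _ ≤ (under H u k).ncard + (under H (u + (k : ℕ)) (d - k)).ncard + 1 := by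
            have := Set.ncard_union_le (under H u k) (under H (u + (k : ℕ)) (d - k))
            have h1 : ({s(u, u + (d : ℕ))} : Set (Sym2 (ZMod n))).ncard = 1 := Set.ncard_singleton _
            omega
        _ ≤ (2 * k - 1) + (2 * (d - k) - 1) + 1 := by
            have h1 := ih k (by omega) (by omega) (by omega) u
            have h2 := ih (d - k) (by omega) (by omega) (by omega) (u + (k : ℕ))
            omega
        _ ≤ 2 * d - 1 := by omega

lemma edge_bound (H : SimpleGraph (ZMod n)) (h3 : 3 ≤ n) (hH : ∀ i : ZMod n, H.Adj i (i + 1))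
    (hnc : Noncross H) : H.edgeSet.ncard ≤ 2 * n - 3 := by
  have : H.edgeSet = under H 0 (n - 1) := by
    ext e
    simp only [under, Set.mem_setOf_eq]
    refine ⟨fun he => ⟨he, fun w _ => by have := ZMod.val_lt (w - 0); omega⟩, fun h => h.1⟩
  rw [this]
  have := under_bound H hH hnc (n - 1) (by omega) le_rfl 0
  omega

lemma ear (G : SimpleGraph (ZMod n)) (h3 : 3 ≤ n)
    (hK4 : ¬ IsMinorOf (completeGraph (Fin 4)) G)
    (hcycle : ∀ i : ZMod n, G.Adj i (i + 1)) (hmax : G.edgeSet.ncard = 2 * n - 3)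
    {u v : ZMod n} (huv : G.Adj u v) (hd : 2 ≤ (v - u).val) :
    ∃ w, G.Adj u w ∧ G.Adj w v ∧ 1 ≤ (w - u).val ∧ (w - u).val ≤ (v - u).val - 1 := by
  classical
  obtain ⟨d, hdval⟩ : ∃ d, d = (v - u).val := ⟨_, rfl⟩
  rw [← hdval] at hd ⊢
  have hdn : d < n := hdval ▸ ZMod.val_lt _
  have hv' : v = u + ((d : ℕ) : ZMod n) := by rw [hdval, zval_back]; ring
  have hKne : ((Finset.Icc 1 (d - 1)).filter (fun j => G.Adj (u + (j : ℕ)) v)).Nonempty := by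
    refine ⟨d - 1, ?_⟩
    simp only [Finset.mem_filter, Finset.mem_Icc]
    refine ⟨⟨by omega, le_rfl⟩, ?_⟩
    have : v = (u + ((d - 1 : ℕ) : ZMod n)) + 1 := by
      rw [hv']
      have : ((d : ℕ) : ZMod n) = ((d - 1 : ℕ) : ZMod n) + 1 := by
        push_cast [Nat.cast_sub (by omega : 1 ≤ d)]; ring
      rw [this, add_assoc]
    rw [this]
    exact hcycle _
  obtain ⟨k, hk1, hkd, hadjkv, hmin⟩ :
      ∃ k, 1 ≤ k ∧ k ≤ d - 1 ∧ G.Adj (u + (k : ℕ)) v ∧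
        ∀ j, 1 ≤ j → j < k → ¬ G.Adj (u + (j : ℕ)) v := by
    refine ⟨((Finset.Icc 1 (d - 1)).filter (fun j => G.Adj (u + (j : ℕ)) v)).min' hKne,
      ?_, ?_, ?_, ?_⟩
    · have := Finset.min'_mem _ hKne
      rw [Finset.mem_filter, Finset.mem_Icc] at this
      exact this.1.1
    · have := Finset.min'_mem _ hKne
      rw [Finset.mem_filter, Finset.mem_Icc] at this
      exact this.1.2
    · have := Finset.min'_mem _ hKne
      rw [Finset.mem_filter] at this
      exact this.2
    · intro j hj1 hjk hadj
      have hmm := Finset.min'_mem _ hKne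
      rw [Finset.mem_filter, Finset.mem_Icc] at hmm
      have hjmem : j ∈ (Finset.Icc 1 (d - 1)).filter (fun j => G.Adj (u + (j : ℕ)) v) := by
        rw [Finset.mem_filter, Finset.mem_Icc]
        exact ⟨⟨hj1, by omega⟩, hadj⟩
      have := Finset.min'_le _ j hjmem
      omega
  obtain ⟨w, hw⟩ : ∃ w, w = u + ((k : ℕ) : ZMod n) := ⟨_, rfl⟩
  rw [← hw] at hadjkv
  have hwu : (w - u).val = k := by rw [hw]; exact zval_add_pos u (by omega)
  by_cases hGuw : G.Adj u w
  · exact ⟨w, hGuw, hadjkv, by omega, by omega⟩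
  exfalso
  have hne_uw : u ≠ w := by
    intro h
    rw [← h] at hwu
    simp at hwu
    omega
  have hncG : Noncross G := noncross_of_G G hK4 hcycle
  have hkval : ((k : ℕ) : ZMod n).val = k := ZMod.val_cast_of_lt (by omega)
  -- no G-edge has exactly one endpoint strictly inside the arc (u, w)
  have inside_out : ∀ e f : ZMod n, G.Adj e f → 0 < (e - u).val → (e - u).val < k →
      k < (f - u).val → False := by
    intro e f hef hα1 hα2 hβ
    set α := (e - u).val with hα
    set β := (f - u).val with hβv
    have hβn : β < n := ZMod.val_lt _
    have hwe : (w - e).val = k - α := by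
      have : w - e = (w - u) - (e - u) := by ring
      rw [this, ZMod.val_sub (by omega), hwu]
    have hew : (e - w).val = n - (k - α) := by
      have h1 : e - w = -(w - e) := by ring
      rw [h1, zval_neg (by intro h; rw [h] at hwe; simp at hwe; omega)]
      rw [hwe]
    rcases Nat.lt_trichotomy β d with hβd | hβd | hβd
    · -- β < d : edge (e,f) crosses (w,v)
      have hfw : (f - w).val = β - k := by
        have : f - w = (f - u) - (w - u) := by ring
        rw [this, ZMod.val_sub (by omega), hwu]
      have hvw : (v - w).val = d - k := by
        have : v - w = (v - u) - (w - u) := by ring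
        rw [this, ZMod.val_sub (by omega), hwu, ← hdval]
      exact hncG w v f e hadjkv hef.symm ⟨by omega, by omega, by omega⟩
    · -- β = d : f = v, contradicting minimality
      have hf : f = v := by
        have h1 : f = u + ((β : ℕ) : ZMod n) := by rw [hβv, zval_back]; ring
        rw [h1, hβd, ← hv']
      have he : e = u + ((α : ℕ) : ZMod n) := by rw [hα, zval_back]; ring
      exact hmin α (by omega) (by omega) (by rw [← he, ← hf]; exact hef)
    · -- β > d : edge (e,f) crosses (u,v)
      exact hncG u v e f huv hef ⟨by omega, by omega, by omega⟩
  -- the augmented graph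
  set G' := G ⊔ fromEdgeSet {s(u, w)} with hG'
  have hadj' : ∀ a b : ZMod n, G'.Adj a b ↔ G.Adj a b ∨ ((a = u ∧ b = w) ∨ (a = w ∧ b = u)) := by
    intro a b
    rw [hG', sup_adj, fromEdgeSet_adj]
    constructor
    · rintro (h | ⟨h1, h2⟩)
      · exact Or.inl h
      · rw [Set.mem_singleton_iff, Sym2.eq_iff] at h1
        exact Or.inr h1
    · rintro (h | (⟨rfl, rfl⟩ | ⟨rfl, rfl⟩))
      · exact Or.inl h
      · exact Or.inr ⟨by simp, hne_uw⟩
      · exact Or.inr ⟨by rw [Set.mem_singleton_iff, Sym2.eq_iff]; tauto, hne_uw.symm⟩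
  have hcycle' : ∀ i : ZMod n, G'.Adj i (i + 1) := fun i => by
    rw [hadj']; exact Or.inl (hcycle i)
  have hnuw : (u - w).val = n - k := by
    have h1 : u - w = -(w - u) := by ring
    rw [h1, zval_neg (by intro h; rw [h] at hwu; simp at hwu; omega), hwu]
  have hnc' : Noncross G' := by
    intro a b c e hab hce hcr
    obtain ⟨h1, h2, h3'⟩ := hcr
    rw [hadj'] at hab hce
    rcases hab with hab | hab
    · rcases hce with hce | hce
      · exact hncG a b c e hab hce ⟨h1, h2, h3'⟩
      · -- (c,e) is the new edge, (a,b) an old edge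
        rcases hce with ⟨hc, he'⟩ | ⟨hc, he'⟩
        · -- c = u, e = w : B1
          rw [hc] at h1 h2
          rw [he'] at h3'
          set p := (u - a).val with hp
          set q := (b - a).val with hq
          set r := (w - a).val with hr
          have hrn : r < n := ZMod.val_lt _
          have hbu : (b - u).val = q - p := by
            have : b - u = (b - a) - (u - a) := by ring
            rw [this, ZMod.val_sub (by omega)]
          have hwu2 : k = r - p := by
            have : w - u = (w - a) - (u - a) := by ring
            rw [← hwu, this, ZMod.val_sub (by omega)]
          have hau : (a - u).val = n - p := by
            have h4 : a - u = -(u - a) := by ring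
            rw [h4, zval_neg (by intro h; rw [h] at hp; simp at hp; omega)]
          exact inside_out b a hab.symm (by omega) (by omega) (by omega)
        · -- c = w, e = u : B2
          rw [hc] at h1 h2
          rw [he'] at h3'
          set p := (w - a).val with hp
          set q := (b - a).val with hq
          set r := (u - a).val with hr
          have hrn : r < n := ZMod.val_lt _
          have huw2 : (u - w).val = r - p := by
            have : u - w = (u - a) - (w - a) := by ring
            rw [this, ZMod.val_sub (by omega)]
          have hk2 : k = n - (r - p) := by
            have h4 : w - u = -(u - w) := by ring
            rw [← hwu, h4, zval_neg (by intro h; rw [h] at huw2; simp at huw2; omega), huw2]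
          have hau : (a - u).val = n - r := by
            have h4 : a - u = -(u - a) := by ring
            rw [h4, zval_neg (by intro h; rw [h] at hr; simp at hr; omega)]
          have hub : (u - b).val = r - q := by
            have : u - b = (u - a) - (b - a) := by ring
            rw [this, ZMod.val_sub (by omega)]
          have hbu : (b - u).val = n - (r - q) := by
            have h4 : b - u = -(u - b) := by ring
            rw [h4, zval_neg (by intro h; rw [h] at hub; simp at hub; omega), hub]
          exact inside_out a b hab (by omega) (by omega) (by omega)
    · -- (a,b) is the new edge
      rcases hab with ⟨ha', hb'⟩ | ⟨ha', hb'⟩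
      · -- a = u, b = w : A1
        rw [ha'] at h1 h2 h3'
        rw [hb', hwu] at h2 h3'
        rcases hce with hce | hce
        · exact inside_out c e hce h1 h2 h3'
        · rcases hce with ⟨hc, he'⟩ | ⟨hc, he'⟩
          · rw [hc] at h1; simp at h1
          · rw [hc, hwu] at h2; omega
      · -- a = w, b = u : A2
        rw [ha'] at h1 h2 h3'
        rw [hb', hnuw] at h2 h3'
        rcases hce with hce | hce
        · have hγn : (c - w).val < n := ZMod.val_lt _
          have hδn : (e - w).val < n := ZMod.val_lt _
          have hcu : (c - u).val = (c - w).val + k := by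
            have h4 : c - u = (c - w) + (w - u) := by ring
            rw [h4, ZMod.val_add_of_lt (by rw [hwu]; omega), hwu]
          have heu : (e - u).val = (e - w).val - (n - k) := by
            have h4 : e - u = (e - w) - (u - w) := by ring
            rw [h4, ZMod.val_sub (by rw [hnuw]; omega), hnuw]
          have h6 : k ≤ d - 1 := hkd
          exact inside_out e c hce.symm (by omega) (by omega) (by omega)
        · rcases hce with ⟨hc, he'⟩ | ⟨hc, he'⟩
          · rw [hc, hnuw] at h2; omega
          · rw [hc] at h1; simp at h1
  -- contradiction with the edge count
  have hbound := edge_bound G' h3 hcycle' hnc'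
  have hsets : G'.edgeSet = insert s(u, w) G.edgeSet := by
    rw [hG', edgeSet_sup, edgeSet_fromEdgeSet]
    ext e
    simp only [Set.mem_union, Set.mem_diff, Set.mem_singleton_iff, Set.mem_setOf_eq,
      Set.mem_insert_iff]
    constructor
    · rintro (h | ⟨rfl, _⟩)
      · exact Or.inr h
      · exact Or.inl rfl
    · rintro (rfl | h)
      · exact Or.inr ⟨rfl, by rw [Sym2.mem_diagSet, Sym2.mk_isDiag_iff]; exact hne_uw⟩
      · exact Or.inl h
  have hnotmem : s(u, w) ∉ G.edgeSet := by
    rw [mem_edgeSet]; exact hGuw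
  rw [hsets, Set.ncard_insert_of_notMem hnotmem (Set.toFinite _), hmax] at hbound
  omega

lemma arc_ncard' (u v : ZMod n) : {w : ZMod n | (w - u).val ≤ (v - u).val}.ncard = (v - u).val + 1 := by
  classical
  have hlt := ZMod.val_lt (v - u)
  have harc : {w : ZMod n | (w - u).val ≤ (v - u).val} =
      ↑((Finset.range ((v - u).val + 1)).image (fun m : ℕ => u + (m : ZMod n))) := by
    ext z
    simp only [Finset.coe_image, Finset.coe_range, Set.mem_image, Set.mem_Iio, Set.mem_setOf_eq]
    constructor
    · intro hz
      exact ⟨(z - u).val, by omega, by rw [zval_back]; ring⟩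
    · rintro ⟨m, hm, rfl⟩
      rw [zval_add_pos u (by omega)]
      omega
  rw [harc, Set.ncard_coe_finset, Finset.card_image_of_injOn, Finset.card_range]
  intro m1 h1 m2 h2 he
  simp only [Finset.coe_range, Set.mem_Iio] at h1 h2
  have he' : u + (m1 : ZMod n) = u + (m2 : ZMod n) := he
  have e2 : (u + (m1 : ZMod n) - u).val = (u + (m2 : ZMod n) - u).val := by rw [he']
  rwa [zval_add_pos u (by omega), zval_add_pos u (by omega)] at e2

lemma main_rec (G : SimpleGraph (ZMod n)) (h3 : 3 ≤ n)
    (hK4 : ¬ IsMinorOf (completeGraph (Fin 4)) G)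
    (hcycle : ∀ i : ZMod n, G.Adj i (i + 1)) (hmax : G.edgeSet.ncard = 2 * n - 3)
    (ℓ : ℕ) (hl : 1 ≤ ℓ) (x : ZMod n) :
    ∀ s : ℕ, ∀ u v : ZMod n, G.Adj u v → (v - u).val = s → ℓ + 1 ≤ s →
    ((u = x + 1 ∧ v = x) ∨
      (x ∉ {w : ZMod n | (w - u).val ≤ (v - u).val} ∨
       x + 1 ∉ {w : ZMod n | (w - u).val ≤ (v - u).val})) →
    ∃ u' v' : ZMod n, G.Adj u' v' ∧
      ℓ + 2 ≤ {w : ZMod n | (w - u').val ≤ (v' - u').val}.ncard ∧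
      {w : ZMod n | (w - u').val ≤ (v' - u').val}.ncard ≤ 2 * ℓ + 1 ∧
      (¬ (u' = x ∧ v' = x + 1 ∨ u' = x + 1 ∧ v' = x) →
        ¬ (x ∈ {w : ZMod n | (w - u').val ≤ (v' - u').val} ∧
           x + 1 ∈ {w : ZMod n | (w - u').val ≤ (v' - u').val})) := by
  intro s
  induction s using Nat.strong_induction_on with
  | _ s ih =>
  intro u v huv hs hls hX
  rcases le_or_gt s (2 * ℓ) with hsmall | hbig
  · -- base case : take (u, v) itself
    refine ⟨u, v, huv, ?_, ?_, ?_⟩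
    · rw [arc_ncard', hs]; omega
    · rw [arc_ncard', hs]; omega
    · intro hne hmem
      rcases hX with ⟨h1, h2⟩ | hav
      · exact hne (Or.inr ⟨h1, h2⟩)
      · rcases hav with h | h
        · exact h hmem.1
        · exact h hmem.2
  · -- recursive case
    have hd2 : 2 ≤ (v - u).val := by omega
    obtain ⟨w, huw, hwv, hw1, hw2⟩ := ear G h3 hK4 hcycle hmax huv hd2
    rw [hs] at hw2
    have hkn : (w - u).val < n := ZMod.val_lt _
    have hsn : s < n := by rw [← hs]; exact ZMod.val_lt _
    have hvw : (v - w).val = s - (w - u).val := by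
      have h4 : v - w = (v - u) - (w - u) := by ring
      rw [h4, ZMod.val_sub (by omega), hs]
    have hsub1 : ∀ z : ZMod n, (z - u).val ≤ (w - u).val → (z - u).val ≤ (v - u).val := by
      intro z hz; rw [hs]; omega
    have hsub2 : ∀ z : ZMod n, (z - w).val ≤ (v - w).val → (z - u).val ≤ (v - u).val := by
      intro z hz
      rw [hvw] at hz
      have h4 : z - u = (z - w) + (w - u) := by ring
      rw [hs, h4, ZMod.val_add_of_lt (by omega)]
      omega
    -- facts for the special case
    have hspecial : u = x + 1 → v = x →
        ((x - u).val = n - 1 ∧ (x + 1 - w).val = n - (w - u).val) := by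
      intro hu hv
      constructor
      · rw [hu]
        have h4 : x - (x + 1) = -1 := by ring
        rw [h4, zval_neg_one h3]
      · rw [← hu]
        have h4 : u - w = -(w - u) := by ring
        rw [h4, zval_neg (by intro h; rw [h] at hw1; simp at hw1)]
    have hsval : u = x + 1 → v = x → s = n - 1 := by
      intro hu hv
      rw [← hs, hv, hu]
      have h4 : x - (x + 1) = -1 := by ring
      rw [h4, zval_neg_one h3]
    rcases le_or_gt (ℓ + 1) (w - u).val with hkbig | hksmall
    · -- recurse on (u, w)
      refine ih (w - u).val (by omega) u w huw rfl hkbig ?_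
      rcases hX with ⟨hu, hv⟩ | hav
      · refine Or.inr (Or.inl ?_)
        intro hmem
        rw [Set.mem_setOf_eq] at hmem
        have := (hspecial hu hv).1
        omega
      · refine Or.inr ?_
        rcases hav with h | h
        · exact Or.inl (fun hmem => h (hsub1 _ hmem))
        · exact Or.inr (fun hmem => h (hsub1 _ hmem))
    · -- recurse on (w, v)
      refine ih (s - (w - u).val) (by omega) w v hwv hvw (by omega) ?_
      rcases hX with ⟨hu, hv⟩ | hav
      · refine Or.inr (Or.inr ?_)
        intro hmem
        rw [Set.mem_setOf_eq, hvw] at hmem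
        have := (hspecial hu hv).2
        omega
      · refine Or.inr ?_
        rcases hav with h | h
        · exact Or.inl (fun hmem => h (hsub2 _ hmem))
        · exact Or.inr (fun hmem => h (hsub2 _ hmem))

end AuxStmt10

/-- Decomposition lemma: a maximal outerplanar graph on `n ≥ ℓ+2` vertices (with
canonical outer cycle `0,1,…,n-1` on `ZMod n`), with `x(x+1)` an edge of the outer face,
has an edge `uv` such that the `uv`-split subgraph on the arc from `u` to `v` has `h`
vertices with `ℓ+2 ≤ h ≤ 2ℓ+1` and, if `uv ≠ x(x+1)`, does not contain the edge
`x(x+1)`. -/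
theorem stmt10 (n ℓ : ℕ) [NeZero n] (hl : 1 ≤ ℓ) (hn : ℓ + 2 ≤ n)
    (G : SimpleGraph (ZMod n)) (houter : IsOuterplanar G)
    (hcycle : ∀ i : ZMod n, G.Adj i (i + 1))
    (hmax : G.edgeSet.ncard = 2 * n - 3)
    (x : ZMod n) :
    ∃ u v : ZMod n, G.Adj u v ∧
      ℓ + 2 ≤ (arc n u v).ncard ∧ (arc n u v).ncard ≤ 2 * ℓ + 1 ∧
      (¬ (u = x ∧ v = x + 1 ∨ u = x + 1 ∧ v = x) →
        ¬ (x ∈ arc n u v ∧ x + 1 ∈ arc n u v)) := by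
  have h3 : 3 ≤ n := by omega
  have hinit : (x - (x + 1)).val = n - 1 := by
    have h4 : x - (x + 1) = -1 := by ring
    rw [h4, zval_neg_one h3]
  have hres := main_rec G h3 houter.1 hcycle hmax ℓ hl x (n - 1) (x + 1) x
    (hcycle x).symm hinit (by omega) (Or.inl ⟨rfl, rfl⟩)
  exact hres
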